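/- In the k-set agreement algorithm, for any D-bounded vertex-stable root component R^I with I = [a,b] and b >= a + D, in every round x in [a+D, b], any two members p_i, p_j of R have identical accumulated histories up to round a: the union over r' <= a of hist_i[j][r'] equals the union over r' <= a of hist_j[j][r']. -/
import Mathlib


/-- A root component of a directed graph `G`: a strongly connected component
(maximal set of mutually reachable vertices) with no incoming edges from outside. -/
def IsRootComponent {V : Type*} (G : V → V → Prop) (R : Set V) : Prop :=
  R.Nonempty ∧ (∀ p ∈ R, ∀ q ∈ R, Relation.ReflTransGen G p q) ∧
    ∀ p ∈ R, ∀ q, G q p → q ∈ R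

/-- A causal influence chain of length `k` from `p` (starting in round `r`) to `q`. -/
def InflChain {V : Type*} (G : ℕ → V → V → Prop) (r : ℕ) (p q : V) (k : ℕ) : Prop :=
  ∃ f : ℕ → V, f 0 = p ∧ f k = q ∧ ∀ i < k, f i = f (i + 1) ∨ G (r + i) (f i) (f (i + 1))

/-- The dynamic causal distance `cd_r(p,q)`: length of the shortest causal influence
chain from `p` starting in round `r` to `q` (`⊤` if none exists, `1` for `p = q`). -/
noncomputable def cd {V : Type*} (G : ℕ → V → V → Prop) (r : ℕ) (p q : V) : ℕ∞ :=
  sInf {k : ℕ∞ | ∃ m : ℕ, k = (m : ℕ∞) ∧ 1 ≤ m ∧ InflChain G r p q m}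

/-- Consistent histories in a `D`-bounded VSRC: processes run the full-information
flooding protocol on lock histories, where `hist p r j r'` is the content of
`hist_p[j][r']` at the end of round `r` and `created p r` are the locks process
`p` creates in round `r` (including the virtual initial lock at round `0`).
Each process broadcasts its entire history each round, merges received entries,
and adds newly learned locks to its own current-round entry; entries are never
removed.  If `R^I` is a `D`-bounded `I`-vertex-stable root component with
`I = [a,b]` and `b ≥ a + D`, then in every round `x ∈ [a+D, b]` any two members
`i, j ∈ R` have identical accumulated histories up to round `a`:
`⋃_{r' ≤ a} hist_i[j][r'] = ⋃_{r' ≤ a} hist_j[j][r']`. -/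
theorem stmt_18 {V : Type*} [Fintype V] [DecidableEq V] {L : Type*} (G : ℕ → V → V → Prop)
    (hist : V → ℕ → V → ℕ → Set L)
    (created : V → ℕ → Set L)
    -- initial history: only the virtual initial lock of `p` itself
    (hinit : ∀ p j r', hist p 0 j r' = if j = p ∧ r' = 0 then created p 0 else (∅ : Set L))
    -- merge received entries about other processes
    (hothers : ∀ p r j r', j ≠ p → hist p (r + 1) j r' =
      hist p r j r' ∪ ⋃ q ∈ {q | q ≠ p ∧ G (r + 1) q p}, hist q r j r')
    -- own past entries are never modified
    (hown_old : ∀ p r r', r' ≤ r → hist p (r + 1) p r' = hist p r p r')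
    -- own current-round entry: newly created locks plus all newly learned locks
    (hown_new : ∀ p r, hist p (r + 1) p (r + 1) =
      created p (r + 1) ∪
        ⋃ j ∈ {j | j ≠ p}, ⋃ r' : ℕ,
          ((hist p r j r' ∪ ⋃ q ∈ {q | q ≠ p ∧ G (r + 1) q p}, hist q r j r') \
            hist p r j r'))
    -- entries about future rounds are empty
    (hown_future : ∀ p r r', r + 1 < r' → hist p (r + 1) p r' = ∅)
    (R : Set V) (a b D : ℕ) (ha : 1 ≤ a)
    (hab : a + D ≤ b)
    (hVSRC : ∀ x, a ≤ x → x ≤ b → IsRootComponent (G x) R)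
    (hDbounded : ∀ x, a ≤ x → x + D ≤ b + 1 →
      ∀ p ∈ R, ∀ q ∈ R, cd G x p q ≤ (D : ℕ∞)) :
    ∀ x, a + D ≤ x → x ≤ b → ∀ i ∈ R, ∀ j ∈ R,
      (⋃ (r' : ℕ) (_ : r' ≤ a), hist i x j r') =
        ⋃ (r' : ℕ) (_ : r' ≤ a), hist j x j r' := by
  intro x hx1 hx2 i hi j hj
  -- Part 1: `j` knows best about itself, and entries about future rounds are empty.
  have key : ∀ s : ℕ, (∀ r', s < r' → hist j s j r' = ∅) ∧
      (∀ p r', hist p s j r' ⊆ hist j s j r') := by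
    intro s
    induction s with
    | zero =>
      refine ⟨?_, ?_⟩
      · intro r' hr'
        have h0 : r' ≠ 0 := by omega
        simp [hinit, h0]
      · intro p r'
        rw [hinit p j r', hinit j j r']
        by_cases h : j = p ∧ r' = 0
        · obtain ⟨h1, h2⟩ := h
          subst h1; subst h2
          simp
        · simp only [if_neg h]
          exact Set.empty_subset _
    | succ s ih =>
      obtain ⟨ihe, ihs⟩ := ih
      have monoj : ∀ r', hist j s j r' ⊆ hist j (s + 1) j r' := by
        intro r'
        rcases le_or_gt r' s with h | h
        · rw [hown_old j s r' h]
        · rw [ihe r' h]; exact Set.empty_subset _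
      refine ⟨fun r' hr' => hown_future j s r' hr', ?_⟩
      intro p r'
      by_cases hpj : p = j
      · subst hpj; exact le_refl _
      · rw [hothers p s j r' (fun h => hpj h.symm)]
        apply Set.union_subset
        · exact (ihs p r').trans (monoj r')
        · simp only [Set.mem_setOf_eq, Set.iUnion_subset_iff]
          intro q hq
          exact (ihs q r').trans (monoj r')
  -- Monotonicity of any process's entry about `j` (for past rounds)
  have mono1 : ∀ p s r', r' ≤ s → hist p s j r' ⊆ hist p (s + 1) j r' := by
    intro p s r' hr'
    by_cases hpj : p = j
    · rw [hpj, hown_old j s r' hr']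
    · rw [hothers p s j r' (fun h => hpj h.symm)]
      exact Set.subset_union_left
  have mono : ∀ p t s r', r' ≤ s → s ≤ t → hist p s j r' ⊆ hist p t j r' := by
    intro p t
    induction t with
    | zero =>
      intro s r' hr' hst
      have hs : s = 0 := by omega
      subst hs; exact le_refl _
    | succ t iht =>
      intro s r' hr' hst
      rcases Nat.lt_or_ge s (t + 1) with h | h
      · exact (iht s r' hr' (by omega)).trans (mono1 p t r' (by omega))
      · have : s = t + 1 := by omega
        subst this; exact le_refl _
  -- `j`'s own past entries are stable
  have stab : ∀ t r', r' ≤ a → a ≤ t → hist j t j r' = hist j a j r' := by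
    intro t
    induction t with
    | zero =>
      intro r' hr' hat
      have : a = 0 := by omega
      subst this; rfl
    | succ t iht =>
      intro r' hr' hat
      rcases Nat.lt_or_ge a (t + 1) with h | h
      · rw [hown_old j t r' (by omega), iht r' hr' (by omega)]
      · have : a = t + 1 := by omega
        subst this; rfl
  -- Edge propagation: info flows along edges
  have hedge : ∀ p q s r', G (s + 1) q p → r' ≤ s →
      hist q s j r' ⊆ hist p (s + 1) j r' := by
    intro p q s r' hG hr'
    by_cases hpj : p = j
    · rw [hpj]
      exact ((key s).2 q r').trans (mono1 j s r' hr')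
    · by_cases hqp : q = p
      · subst hqp; exact mono1 q s r' hr'
      · rw [hothers p s j r' (fun h => hpj h.symm)]
        apply Set.subset_union_of_subset_right
        exact Set.subset_iUnion₂_of_subset q ⟨hqp, hG⟩ (le_refl _)
  -- Chain propagation
  have hchainprop : ∀ (m : ℕ) (f : ℕ → V), f 0 = j →
      (∀ k < m, f k = f (k + 1) ∨ G (a + 1 + k) (f k) (f (k + 1))) →
      ∀ r', r' ≤ a → ∀ k ≤ m, hist j a j r' ⊆ hist (f k) (a + k) j r' := by
    intro m f hf0 hstep r' hr' k
    induction k with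
    | zero => intro _; simp [hf0]
    | succ k ihk =>
      intro hk
      have ih := ihk (by omega)
      rcases hstep k (by omega) with h | h
      · rw [← h]
        exact ih.trans (mono (f k) (a + k + 1) (a + k) r' (by omega) (by omega))
      · have h' : G (a + k + 1) (f k) (f (k + 1)) := by
          have : a + 1 + k = a + k + 1 := by omega
          rwa [this] at h
        exact ih.trans (hedge (f (k + 1)) (f k) (a + k) r' h' (by omega))
  -- Extract a chain of length ≤ D from `j` to `i` starting in round `a+1`
  obtain ⟨m, hm1, hmD, f, hf0, hfm, hstep⟩ :
      ∃ m, 1 ≤ m ∧ m ≤ D ∧ ∃ f : ℕ → V, f 0 = j ∧ f m = i ∧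
        ∀ k < m, f k = f (k + 1) ∨ G (a + 1 + k) (f k) (f (k + 1)) := by
    have hD := hDbounded (a + 1) (by omega) (by omega) j hj i hi
    by_contra hc
    push_neg at hc
    have hge : (D : ℕ∞) + 1 ≤ cd G (a + 1) j i := by
      apply le_sInf
      rintro k ⟨m, rfl, hm, f, hf0, hfm, hstep⟩
      have hDm : D < m := by
        by_contra hmle
        push_neg at hmle
        obtain ⟨k, hk, hcon⟩ := hc m hm hmle f hf0 hfm
        rcases hstep k hk with h | h
        · exact hcon.1 h
        · exact hcon.2 h
      have : ((D + 1 : ℕ) : ℕ∞) ≤ (m : ℕ∞) := by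
        exact_mod_cast hDm
      simpa using this
    have : (D : ℕ∞) + 1 ≤ (D : ℕ∞) := hge.trans hD
    have : ((D + 1 : ℕ) : ℕ∞) ≤ ((D : ℕ) : ℕ∞) := by simpa [Nat.cast_add] using this
    have : D + 1 ≤ D := by exact_mod_cast this
    omega
  -- Conclude
  apply Set.Subset.antisymm
  · apply Set.iUnion₂_subset
    intro r' hr' y hy
    exact Set.mem_iUnion₂.mpr ⟨r', hr', (key x).2 i r' hy⟩
  · apply Set.iUnion₂_subset
    intro r' hr' y hy
    refine Set.mem_iUnion₂.mpr ⟨r', hr', ?_⟩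
    rw [stab x r' hr' (by omega)] at hy
    have h1 := hchainprop m f hf0 hstep r' hr' m (le_refl m)
    rw [hfm] at h1
    exact (h1.trans (mono i x (a + m) r' (by omega) (by omega))) hy
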